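/- Let (X,Y) be a random vector with joint density, let R_a = R_a(X,Y) and R_b = R_b(X,Y) be radii defined via two gauge functions with continuous star-shaped boundaries, and let Q be an angular variable defined via a third gauge function. If (R_a, Q) has joint density f_a, then (R_b, Q) has joint density f_b(r,q) = (R_a(w)/R_b(w))·f_a(r·R_a(w)/R_b(w), q), where w = (cos_*(q), sin_*(q)) is the point on the angular unit circle at pseudo-angle q. -/

import Mathlib

open MeasureTheory Set
open scoped ENNReal

lemma lintegral_scale_aux (c : ℝ) (hc : 0 < c) (g : ℝ → ℝ≥0∞) (hg : Measurable g) :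
    ∫⁻ r, g r = ENNReal.ofReal c * ∫⁻ r, g (r * c) := by
  have h1 : ∫⁻ r, g (r * c) = ∫⁻ y, g y ∂(Measure.map (· * c) volume) :=
    (lintegral_map hg (measurable_mul_const c)).symm
  rw [h1, Real.map_volume_mul_right (ne_of_gt hc), lintegral_smul_measure,
    abs_of_pos (inv_pos.mpr hc), smul_eq_mul, ← mul_assoc, ← ENNReal.ofReal_mul hc.le,
    mul_inv_cancel₀ (ne_of_gt hc), ENNReal.ofReal_one, one_mul]

/-- Change of radial variable (Lemma on radius change): if `(R_a, Q)` has joint density `f_a`,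
where `R_a, R_b` are radii defined via gauge functions (positively homogeneous of degree 1,
positive on the angular boundary) and `Q` is an angular variable with boundary point
`w(q)` (normalized so `R_ang(w q) = 1`), then `(R_b, Q)` has joint density
`f_b(r,q) = (R_a(w q)/R_b(w q))·f_a(r·R_a(w q)/R_b(w q), q)`.  Formulated as a
pushforward identity under `(r,q) ↦ (r·R_b(w q)/R_a(w q), q)`. -/
theorem stmt7 (Ra Rb Rang : ℝ × ℝ → ℝ) (w : ℝ → ℝ × ℝ)
    (hRa_hom : ∀ t : ℝ, 0 < t → ∀ x : ℝ × ℝ, Ra (t • x) = t * Ra x)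
    (hRb_hom : ∀ t : ℝ, 0 < t → ∀ x : ℝ × ℝ, Rb (t • x) = t * Rb x)
    (hRa_cont : Continuous Ra) (hRb_cont : Continuous Rb)
    (hRa_pos : ∀ q, 0 < Ra (w q)) (hRb_pos : ∀ q, 0 < Rb (w q))
    (hw_meas : Measurable w)
    (hang : ∀ q, Rang (w q) = 1)
    (fa : ℝ → ℝ → ℝ)
    (hfa : Measurable (fun p : ℝ × ℝ => fa p.1 p.2))
    (hfann : ∀ r q, 0 ≤ fa r q) :
    Measure.map (fun p : ℝ × ℝ => (p.1 * Rb (w p.2) / Ra (w p.2), p.2))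
        (Measure.withDensity volume (fun p : ℝ × ℝ => ENNReal.ofReal (fa p.1 p.2)))
      = Measure.withDensity volume (fun p : ℝ × ℝ => ENNReal.ofReal
          ((Ra (w p.2) / Rb (w p.2)) * fa (p.1 * Ra (w p.2) / Rb (w p.2)) p.2)) := by
  set c : ℝ → ℝ := fun q => Rb (w q) / Ra (w q) with hc_def
  have hc_pos : ∀ q, 0 < c q := fun q => div_pos (hRb_pos q) (hRa_pos q)
  have hRaw : Measurable fun q => Ra (w q) := hRa_cont.measurable.comp hw_meas
  have hRbw : Measurable fun q => Rb (w q) := hRb_cont.measurable.comp hw_meas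
  have hc_meas : Measurable c := hRbw.div hRaw
  set T : ℝ × ℝ → ℝ × ℝ := fun p => (p.1 * Rb (w p.2) / Ra (w p.2), p.2) with hT_def
  have hT : Measurable T :=
    ((measurable_fst.mul (hRbw.comp measurable_snd)).div
      (hRaw.comp measurable_snd)).prodMk measurable_snd
  set F : ℝ × ℝ → ℝ≥0∞ := fun p => ENNReal.ofReal (fa p.1 p.2) with hF_def
  set G : ℝ × ℝ → ℝ≥0∞ := fun p => ENNReal.ofReal
      ((Ra (w p.2) / Rb (w p.2)) * fa (p.1 * Ra (w p.2) / Rb (w p.2)) p.2) with hG_def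
  have hF_meas : Measurable F := hfa.ennreal_ofReal
  have hG_meas : Measurable G := by
    apply Measurable.ennreal_ofReal
    exact ((hRaw.comp measurable_snd).div (hRbw.comp measurable_snd)).mul
      (hfa.comp (((measurable_fst.mul (hRaw.comp measurable_snd)).div
        (hRbw.comp measurable_snd)).prodMk measurable_snd))
  ext s hs
  rw [Measure.map_apply hT hs, withDensity_apply _ (hT hs), withDensity_apply _ hs,
    ← lintegral_indicator (hT hs), ← lintegral_indicator hs,
    Measure.volume_eq_prod, lintegral_prod_symm' _ (hF_meas.indicator (hT hs)),
    lintegral_prod_symm' _ (hG_meas.indicator hs)]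
  refine lintegral_congr fun q => ?_
  have hq := hc_pos q
  -- inner integrands
  have key : ∀ r : ℝ, (s.indicator G) (r * c q, q)
      = ENNReal.ofReal (c q)⁻¹ * (T ⁻¹' s).indicator F (r, q) := by
    intro r
    have hmem : (r * c q, q) ∈ s ↔ (r, q) ∈ T ⁻¹' s := by
      simp only [Set.mem_preimage, hT_def, hc_def, mul_div_assoc]
    by_cases h : (r, q) ∈ T ⁻¹' s
    · rw [Set.indicator_of_mem (hmem.mpr h), Set.indicator_of_mem h]
      have harg : r * c q * Ra (w q) / Rb (w q) = r := by
        rw [mul_assoc, hc_def]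
        simp only []
        rw [div_mul_cancel₀ _ (ne_of_gt (hRa_pos q))]
        exact mul_div_cancel_right₀ r (ne_of_gt (hRb_pos q))
      have hco : Ra (w q) / Rb (w q) = (c q)⁻¹ := by
        rw [hc_def]; simp [inv_div]
      simp only [hG_def, hF_def, harg, hco]
      rw [ENNReal.ofReal_mul (le_of_lt (inv_pos.mpr hq))]
    · rw [Set.indicator_of_notMem (fun hm => h (hmem.mp hm)),
        Set.indicator_of_notMem h, mul_zero]
  have hKmeas : Measurable fun r => (s.indicator G) (r, q) :=
    (hG_meas.indicator hs).comp (measurable_id.prodMk measurable_const)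
  calc ∫⁻ r, (T ⁻¹' s).indicator F (r, q)
      = ENNReal.ofReal (c q) * ENNReal.ofReal (c q)⁻¹
        * ∫⁻ r, (T ⁻¹' s).indicator F (r, q) := by
        rw [← ENNReal.ofReal_mul hq.le, mul_inv_cancel₀ (ne_of_gt hq),
          ENNReal.ofReal_one, one_mul]
    _ = ENNReal.ofReal (c q) * ∫⁻ r, ENNReal.ofReal (c q)⁻¹
          * (T ⁻¹' s).indicator F (r, q) := by
        have hFq : Measurable fun r : ℝ => (T ⁻¹' s).indicator F (r, q) :=
          (hF_meas.indicator (hT hs)).comp (measurable_id.prodMk measurable_const)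
        rw [mul_assoc, lintegral_const_mul (ENNReal.ofReal (c q)⁻¹) hFq]
    _ = ENNReal.ofReal (c q) * ∫⁻ r, (s.indicator G) (r * c q, q) := by
        simp_rw [key]
    _ = ∫⁻ r, (s.indicator G) (r, q) :=
        (lintegral_scale_aux (c q) hq _ hKmeas).symm
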